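/- arXiv:2512.16996 — 2 statements merged into one kernel-verified Lean document; each statement's English description precedes it below -/
import Mathlib

section
/- For all ℓ,s ∈ ℂ, the bilinear form β_{ℓ−s} on the affine Kac–Moody algebra 𝔡̃_{ℓ,s} is symmetric, invariant (β_{ℓ−s}([A,B],C) = β_{ℓ−s}(A,[B,C]) for all A,B,C ∈ 𝔡̃_{ℓ,s}), and non-degenerate (its radical is zero); moreover the β_{ℓ−s}-orthogonal complement of the subspace 𝔡[t,t⁻¹] equals ℂ∂ ⊕ ℂc. -/
open scoped TensorProduct

noncomputable section

variable (L : Type) [LieRing L] [LieAlgebra ℂ L]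

/-- The coadjoint action of `L` on its dual space: `(coad L x f) z = -f ⁅x, z⁆`. -/
def coad : L →ₗ[ℂ] Module.Dual ℂ L →ₗ[ℂ] Module.Dual ℂ L :=
  -(Module.Dual.transpose (R := ℂ) ∘ₗ ((LieAlgebra.ad ℂ L : L →ₗ[ℂ] Module.End ℂ L)))

variable {L}

lemma coad_apply (x : L) (f : Module.Dual ℂ L) (z : L) :
    coad L x f z = -f ⁅x, z⁆ := by
  simp [coad, Module.Dual.transpose_apply]

lemma coad_lie (x y : L) :
    coad L ⁅x, y⁆ = coad L x ∘ₗ coad L y - coad L y ∘ₗ coad L x := by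
  ext f z
  simp only [coad_apply, LinearMap.sub_apply, LinearMap.comp_apply]
  rw [leibniz_lie x y z, map_add]
  ring

variable (L)

/-- The bracket of the cotangent Lie algebra `T*𝔤 = 𝔤 ⋉ 𝔤*`:
`[(x,f),(y,g)] = ([x,y], x•g − y•f)`. -/
def dbkt (a b : L × Module.Dual ℂ L) : L × Module.Dual ℂ L :=
  (⁅a.1, b.1⁆, coad L a.1 b.2 - coad L b.1 a.2)

instance cotLieRing : LieRing (L × Module.Dual ℂ L) :=
  { (inferInstance : AddCommGroup (L × Module.Dual ℂ L)) with
    bracket := dbkt L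
    add_lie := by
      intro a b c
      show dbkt L (a + b) c = dbkt L a c + dbkt L b c
      simp only [dbkt, Prod.fst_add, Prod.snd_add, Prod.mk_add_mk, add_lie, map_add,
        LinearMap.add_apply, Prod.mk.injEq]
      exact ⟨trivial, by abel⟩
    lie_add := by
      intro a b c
      show dbkt L a (b + c) = dbkt L a b + dbkt L a c
      simp only [dbkt, Prod.fst_add, Prod.snd_add, Prod.mk_add_mk, lie_add, map_add,
        LinearMap.add_apply, Prod.mk.injEq]
      exact ⟨trivial, by abel⟩
    lie_self := by
      intro a
      show dbkt L a a = 0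
      simp [dbkt, Prod.ext_iff]
    leibniz_lie := by
      intro a b c
      show dbkt L a (dbkt L b c) = dbkt L (dbkt L a b) c + dbkt L b (dbkt L a c)
      simp only [dbkt, Prod.mk_add_mk, Prod.mk.injEq, coad_lie, map_sub,
        LinearMap.sub_apply, LinearMap.comp_apply]
      exact ⟨leibniz_lie a.1 b.1 c.1, by abel⟩ }

instance cotLieAlgebra : LieAlgebra ℂ (L × Module.Dual ℂ L) :=
  { (inferInstance : Module ℂ (L × Module.Dual ℂ L)) with
    lie_smul := by
      intro t a b
      show dbkt L a (t • b) = t • dbkt L a b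
      simp only [dbkt, Prod.smul_fst, Prod.smul_snd, Prod.smul_mk, lie_smul, map_smul,
        LinearMap.smul_apply, Prod.mk.injEq, smul_sub] }

@[simp] lemma cot_bracket_def (a b : L × Module.Dual ℂ L) :
    ⁅a, b⁆ = (⁅a.1, b.1⁆, coad L a.1 b.2 - coad L b.1 a.2) := rfl

end

noncomputable section LoopModel

/-- The loop algebra `𝔡[t,t⁻¹]` of the cotangent Lie algebra `𝔡 = T*𝔤`, modelled as finitely
supported functions `ℤ → 𝔡` (the value at `n` being the coefficient of `tⁿ`). -/
abbrev LoopD (L : Type) [LieRing L] [LieAlgebra ℂ L] := ℤ →₀ (L × Module.Dual ℂ L)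

variable {L : Type} [LieRing L] [LieAlgebra ℂ L]

/-- The Lie bracket of the loop algebra: `[a⊗tⁿ, b⊗tᵐ] = [a,b]⊗tⁿ⁺ᵐ`. -/
def loopBr (u v : LoopD L) : LoopD L :=
  u.sum fun n a => v.sum fun m b => Finsupp.single (n + m) ⁅a, b⁆

/-- The canonical pairing form `κ₀` on `𝔡`: `κ₀((x,f),(y,g)) = f(y) + g(x)`. -/
def kappa0 (a b : L × Module.Dual ℂ L) : ℂ :=
  a.2 b.1 + b.2 a.1

/-- The form `κ_ℓ = κ₀ + ℓ·κ_𝔤` on `𝔡`, the Killing form of `𝔤` being extended by zero. -/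
def kappaL (ℓ : ℂ) (a b : L × Module.Dual ℂ L) : ℂ :=
  kappa0 a b + ℓ * killingForm ℂ L a.1 b.1

/-- The derivation `∂_ε` of `𝔡[t,t⁻¹]`: `∂_ε((x,f)⊗tⁿ) = n·(0,ψ(x))⊗tⁿ⁻¹`, where
`ψ(x) = κ_𝔤(x,−)`. -/
def depsLoop (u : LoopD L) : LoopD L :=
  u.sum fun n a =>
    Finsupp.single (n - 1) ((n : ℂ) • (((0 : L), killingForm ℂ L a.1) : L × Module.Dual ℂ L))

/-- The derivation `∂_t` of `𝔡[t,t⁻¹]`: `∂_t(a⊗tⁿ) = n·a⊗tⁿ⁻¹`. -/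
def dtLoop (u : LoopD L) : LoopD L :=
  u.sum fun n a => Finsupp.single (n - 1) ((n : ℂ) • a)

/-- `∂_s = ∂_t + s·∂_ε`. -/
def dsLoop (s : ℂ) (u : LoopD L) : LoopD L :=
  dtLoop u + s • depsLoop u

/-- The 2-cocycle `ω_ℓ(a⊗tⁿ, b⊗tᵐ) = n·δ_{n+m,0}·κ_ℓ(a,b)` on `𝔡[t,t⁻¹]`. -/
def omegaL (ℓ : ℂ) (u v : LoopD L) : ℂ :=
  u.sum fun n a => (n : ℂ) * kappaL ℓ a (v (-n))

/-- The bracket of the central extension `𝔡[t,t⁻¹] ⊕ ℂc_ℓ`. -/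
def extBr (ℓ : ℂ) (A B : LoopD L × ℂ) : LoopD L × ℂ :=
  (loopBr A.1 B.1, omegaL ℓ A.1 B.1)

/-- The extension of `∂_ε` to `𝔡[t,t⁻¹] ⊕ ℂc_ℓ` acting by zero on `c_ℓ`. -/
def extDeps (A : LoopD L × ℂ) : LoopD L × ℂ :=
  (depsLoop A.1, 0)

end LoopModel

noncomputable section TdModel

variable {L : Type} [LieRing L] [LieAlgebra ℂ L]

/-- The affine Kac–Moody algebra `𝔡̃_{ℓ,s} = ℂ∂ ⊕ 𝔡[t,t⁻¹] ⊕ ℂc` (first coordinate: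
coefficient of `∂`, last coordinate: coefficient of `c`). -/
abbrev TdD (L : Type) [LieRing L] [LieAlgebra ℂ L] := ℂ × LoopD L × ℂ

/-- The Lie bracket of `𝔡̃_{ℓ,s}`: `c` is central, `[∂,u] = ∂_s(u)` and
`[u,v] = [u,v]_loop + ω_ℓ(u,v)·c` for `u, v ∈ 𝔡[t,t⁻¹]`. -/
def tdBr (ℓ s : ℂ) (A B : TdD L) : TdD L :=
  (0, A.1 • dsLoop s B.2.1 - B.1 • dsLoop s A.2.1 + loopBr A.2.1 B.2.1,
    omegaL ℓ A.2.1 B.2.1)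

/-- The bilinear form `β_r` on `𝔡̃` determined by `β_r(a⊗tⁿ, b⊗tᵐ) = δ_{n+m,−1}·κ_r(a,b)`,
`β_r(c,∂) = β_r(∂,c) = 1`, `β_r(∂,∂) = β_r(c,c) = 0` and `β_r(𝔡[t,t⁻¹], ℂ∂⊕ℂc) = 0`. -/
def betaForm (r : ℂ) (A B : TdD L) : ℂ :=
  A.1 * B.2.2 + A.2.2 * B.1 + A.2.1.sum fun n a => kappaL r a (B.2.1 (-n - 1))

end TdModel


noncomputable section AuxProof

variable {L : Type} [LieRing L] [LieAlgebra ℂ L]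

lemma killing_comm (x y : L) : killingForm ℂ L x y = killingForm ℂ L y x :=
  LieModule.traceForm_comm ℂ L L x y

lemma killing_lie (x y z : L) : killingForm ℂ L ⁅x, y⁆ z = killingForm ℂ L x ⁅y, z⁆ :=
  LieModule.traceForm_apply_lie_apply ℂ L L x y z

lemma kappaL_zero_left (r : ℂ) (b : L × Module.Dual ℂ L) : kappaL r 0 b = 0 := by
  simp [kappaL, kappa0]

lemma kappaL_zero_right (r : ℂ) (a : L × Module.Dual ℂ L) : kappaL r a 0 = 0 := by
  simp [kappaL, kappa0]

lemma kappaL_add_left (r : ℂ) (a a' b : L × Module.Dual ℂ L) :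
    kappaL r (a + a') b = kappaL r a b + kappaL r a' b := by
  simp [kappaL, kappa0, map_add]; ring

lemma kappaL_add_right (r : ℂ) (a b b' : L × Module.Dual ℂ L) :
    kappaL r a (b + b') = kappaL r a b + kappaL r a b' := by
  simp [kappaL, kappa0, map_add]; ring

lemma kappaL_smul_left (r t : ℂ) (a b : L × Module.Dual ℂ L) :
    kappaL r (t • a) b = t * kappaL r a b := by
  simp [kappaL, kappa0, map_smul, smul_eq_mul]; ring

lemma kappaL_smul_right (r t : ℂ) (a b : L × Module.Dual ℂ L) :
    kappaL r a (t • b) = t * kappaL r a b := by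
  simp [kappaL, kappa0, map_smul, smul_eq_mul]; ring

lemma kappaL_comm (r : ℂ) (a b : L × Module.Dual ℂ L) :
    kappaL r a b = kappaL r b a := by
  simp only [kappaL, kappa0]
  rw [killing_comm]; ring

lemma kappaL_lie (r : ℂ) (a b c : L × Module.Dual ℂ L) :
    kappaL r ⁅a, b⁆ c = kappaL r a ⁅b, c⁆ := by
  simp only [kappaL, kappa0, cot_bracket_def, LinearMap.sub_apply, coad_apply]
  rw [killing_lie]
  have h1 : (⁅a.1, c.1⁆ : L) = -⁅c.1, a.1⁆ := (lie_skew _ _).symm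
  have h2 : (⁅a.1, b.1⁆ : L) = -⁅b.1, a.1⁆ := (lie_skew _ _).symm
  rw [h1, h2, map_neg, map_neg]; ring

/-- Local abbreviation for the loop-part of `betaForm`. -/
def SfX (r : ℂ) (u v : LoopD L) : ℂ := u.sum fun n a => kappaL r a (v (-n - 1))

lemma Sf_zero_left (r : ℂ) (v : LoopD L) : SfX r 0 v = 0 := Finsupp.sum_zero_index

lemma Sf_zero_right (r : ℂ) (u : LoopD L) : SfX r u 0 = 0 := by
  simp [SfX, kappaL_zero_right]

lemma Sf_add_left (r : ℂ) (u u' v : LoopD L) :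
    SfX r (u + u') v = SfX r u v + SfX r u' v :=
  Finsupp.sum_add_index' (fun n => kappaL_zero_left r _)
    (fun n a a' => kappaL_add_left r a a' _)

lemma Sf_add_right (r : ℂ) (u v v' : LoopD L) :
    SfX r u (v + v') = SfX r u v + SfX r u v' := by
  simp [SfX, kappaL_add_right, Finsupp.sum_add]

lemma Sf_smul_left (r t : ℂ) (u v : LoopD L) : SfX r (t • u) v = t * SfX r u v := by
  rw [SfX, Finsupp.sum_smul_index' (h := fun n a => kappaL r a (v (-n - 1)))
    (fun i => kappaL_zero_left r _)]
  simp only [kappaL_smul_left]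
  simp only [SfX, Finsupp.sum, Finset.mul_sum]

lemma Sf_smul_right (r t : ℂ) (u v : LoopD L) : SfX r u (t • v) = t * SfX r u v := by
  simp only [SfX, Finsupp.smul_apply, kappaL_smul_right]
  simp only [SfX, Finsupp.sum, Finset.mul_sum]

lemma Sf_neg_left (r : ℂ) (u v : LoopD L) : SfX r (-u) v = - SfX r u v := by
  rw [← neg_one_smul ℂ u, Sf_smul_left]; ring

lemma Sf_sub_left (r : ℂ) (u u' v : LoopD L) :
    SfX r (u - u') v = SfX r u v - SfX r u' v := by
  rw [sub_eq_add_neg, Sf_add_left, Sf_neg_left, sub_eq_add_neg]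

lemma Sf_neg_right (r : ℂ) (u v : LoopD L) : SfX r u (-v) = - SfX r u v := by
  rw [← neg_one_smul ℂ v, Sf_smul_right]; ring

lemma Sf_sub_right (r : ℂ) (u v v' : LoopD L) :
    SfX r u (v - v') = SfX r u v - SfX r u v' := by
  rw [sub_eq_add_neg, Sf_add_right, Sf_neg_right, sub_eq_add_neg]

lemma Sf_single_left (r : ℂ) (n : ℤ) (a : L × Module.Dual ℂ L) (v : LoopD L) :
    SfX r (Finsupp.single n a) v = kappaL r a (v (-n - 1)) :=
  Finsupp.sum_single_index (kappaL_zero_left r _)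

lemma Sf_comm (r : ℂ) (u v : LoopD L) : SfX r u v = SfX r v u := by
  induction u using Finsupp.induction_linear with
  | zero => rw [Sf_zero_left, Sf_zero_right]
  | add f g hf hg => rw [Sf_add_left, Sf_add_right, hf, hg]
  | single n a =>
    induction v using Finsupp.induction_linear with
    | zero => rw [Sf_zero_left, Sf_zero_right]
    | add f g hf hg => rw [Sf_add_left, Sf_add_right, hf, hg]
    | single m b =>
      rw [Sf_single_left, Sf_single_left]
      simp only [Finsupp.single_apply]
      rcases eq_or_ne m (-n - 1) with h | h
      · rw [if_pos h, if_pos (by omega)]; exact kappaL_comm ..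
      · rw [if_neg h, if_neg (by omega), kappaL_zero_right, kappaL_zero_right]

lemma loopBr_zero_left (v : LoopD L) : loopBr 0 v = 0 := Finsupp.sum_zero_index

lemma loopBr_zero_right (u : LoopD L) : loopBr u 0 = 0 := by
  simp [loopBr]

lemma loopBr_single_left (n : ℤ) (a : L × Module.Dual ℂ L) (v : LoopD L) :
    loopBr (Finsupp.single n a) v = v.sum fun m b => Finsupp.single (n + m) ⁅a, b⁆ :=
  Finsupp.sum_single_index (by simp)

lemma loopBr_single_single (n m : ℤ) (a b : L × Module.Dual ℂ L) :
    loopBr (Finsupp.single n a) (Finsupp.single m b) = Finsupp.single (n + m) ⁅a, b⁆ := by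
  rw [loopBr_single_left]
  exact Finsupp.sum_single_index (by simp)

lemma loopBr_add_left (u u' v : LoopD L) :
    loopBr (u + u') v = loopBr u v + loopBr u' v :=
  Finsupp.sum_add_index' (by simp) (by
    intro n a a'
    rw [← Finsupp.sum_add]
    refine Finsupp.sum_congr fun m _ => ?_
    rw [add_lie, Finsupp.single_add])

lemma loopBr_add_right (u v w : LoopD L) :
    loopBr u (v + w) = loopBr u v + loopBr u w := by
  unfold loopBr
  rw [← Finsupp.sum_add]
  refine Finsupp.sum_congr fun n _ => ?_
  exact Finsupp.sum_add_index' (by simp) (by intro m b b'; rw [lie_add, Finsupp.single_add])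

lemma omega_zero_left (ℓ : ℂ) (v : LoopD L) : omegaL ℓ 0 v = 0 := Finsupp.sum_zero_index

lemma omega_zero_right (ℓ : ℂ) (u : LoopD L) : omegaL ℓ u 0 = 0 := by
  simp [omegaL, kappaL_zero_right]

lemma omega_add_left (ℓ : ℂ) (u u' v : LoopD L) :
    omegaL ℓ (u + u') v = omegaL ℓ u v + omegaL ℓ u' v :=
  Finsupp.sum_add_index' (by simp [kappaL_zero_left])
    (by intro n a a'; rw [kappaL_add_left]; ring)

lemma omega_add_right (ℓ : ℂ) (u v v' : LoopD L) :
    omegaL ℓ u (v + v') = omegaL ℓ u v + omegaL ℓ u v' := by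
  simp [omegaL, kappaL_add_right, mul_add, Finsupp.sum_add]

lemma omega_single_left (ℓ : ℂ) (n : ℤ) (a : L × Module.Dual ℂ L) (v : LoopD L) :
    omegaL ℓ (Finsupp.single n a) v = (n : ℂ) * kappaL ℓ a (v (-n)) :=
  Finsupp.sum_single_index (by simp [kappaL_zero_left])

lemma omega_skew (ℓ : ℂ) (u v : LoopD L) : omegaL ℓ u v = - omegaL ℓ v u := by
  induction u using Finsupp.induction_linear with
  | zero => rw [omega_zero_left, omega_zero_right, neg_zero]
  | add f g hf hg => rw [omega_add_left, omega_add_right, hf, hg]; ring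
  | single n a =>
    induction v using Finsupp.induction_linear with
    | zero => rw [omega_zero_left, omega_zero_right, neg_zero]
    | add f g hf hg => rw [omega_add_left, omega_add_right, hf, hg]; ring
    | single m b =>
      rw [omega_single_left, omega_single_left]
      simp only [Finsupp.single_apply]
      rcases eq_or_ne m (-n) with h | h
      · rw [if_pos h, if_pos (by omega), kappaL_comm]
        subst h; push_cast; ring
      · rw [if_neg h, if_neg (by omega), kappaL_zero_right, kappaL_zero_right]; ring

lemma ds_zero (s : ℂ) : dsLoop s (0 : LoopD L) = 0 := by
  simp [dsLoop, dtLoop, depsLoop]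

lemma ds_add (s : ℂ) (u v : LoopD L) : dsLoop s (u + v) = dsLoop s u + dsLoop s v := by
  have hdt : dtLoop (u + v) = dtLoop u + dtLoop v :=
    Finsupp.sum_add_index' (by simp) (by intro n a a'; rw [smul_add, Finsupp.single_add])
  have hde : depsLoop (u + v) = depsLoop u + depsLoop v := by
    refine Finsupp.sum_add_index' (by simp) ?_
    intro n a b
    have : ((0 : L), killingForm ℂ L (a + b).1)
        = ((0 : L), killingForm ℂ L a.1) + ((0 : L), killingForm ℂ L b.1) := by
      simp [Prod.ext_iff, Prod.fst_add, map_add]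
    rw [this, smul_add, Finsupp.single_add]
  rw [dsLoop, hdt, hde, smul_add, dsLoop, dsLoop]; abel

lemma ds_single (s : ℂ) (n : ℤ) (a : L × Module.Dual ℂ L) :
    dsLoop s (Finsupp.single n a) =
      Finsupp.single (n - 1) ((n : ℂ) • a)
        + Finsupp.single (n - 1) ((s * n) • (((0 : L), killingForm ℂ L a.1)
            : L × Module.Dual ℂ L)) := by
  have hdt : dtLoop (Finsupp.single n a) = Finsupp.single (n - 1) ((n : ℂ) • a) :=
    Finsupp.sum_single_index (by simp)
  have hde : depsLoop (Finsupp.single n a)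
      = Finsupp.single (n - 1) ((n : ℂ) • (((0 : L), killingForm ℂ L a.1)
          : L × Module.Dual ℂ L)) :=
    Finsupp.sum_single_index (by simp [Prod.ext_iff])
  rw [dsLoop, hdt, hde, Finsupp.smul_single, smul_smul]

lemma Sf_ds_left (ℓ s : ℂ) (u v : LoopD L) :
    SfX (ℓ - s) (dsLoop s u) v = omegaL ℓ u v := by
  induction u using Finsupp.induction_linear with
  | zero => rw [ds_zero, Sf_zero_left, omega_zero_left]
  | add f g hf hg => rw [ds_add, Sf_add_left, omega_add_left, hf, hg]
  | single n a =>
    rw [ds_single, Sf_add_left, Sf_single_left, Sf_single_left, omega_single_left]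
    have h : -(n - 1) - 1 = -n := by ring
    rw [h, kappaL_smul_left, kappaL_smul_left]
    simp only [kappaL, kappa0, map_zero, LinearMap.zero_apply]
    ring

lemma Sf_ds_right (ℓ s : ℂ) (u v : LoopD L) :
    SfX (ℓ - s) u (dsLoop s v) = - omegaL ℓ u v := by
  rw [Sf_comm, Sf_ds_left, omega_skew]

lemma Sf_loopBr (r : ℂ) (u v w : LoopD L) :
    SfX r (loopBr u v) w = SfX r u (loopBr v w) := by
  induction u using Finsupp.induction_linear with
  | zero => rw [loopBr_zero_left, Sf_zero_left, Sf_zero_left]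
  | add f g hf hg => rw [loopBr_add_left, Sf_add_left, Sf_add_left, hf, hg]
  | single n a =>
    induction v using Finsupp.induction_linear with
    | zero => rw [loopBr_zero_right, loopBr_zero_left, Sf_zero_left, Sf_zero_right]
    | add f g hf hg =>
        rw [loopBr_add_right, loopBr_add_left, Sf_add_left, Sf_add_right, hf, hg]
    | single m b =>
      induction w using Finsupp.induction_linear with
      | zero => rw [loopBr_zero_right, Sf_zero_right, Sf_zero_right]
      | add f g hf hg => rw [loopBr_add_right, Sf_add_right, Sf_add_right, hf, hg]
      | single k c =>
        rw [loopBr_single_single, loopBr_single_single, Sf_single_left, Sf_single_left]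
        simp only [Finsupp.single_apply]
        rcases eq_or_ne k (-(n + m) - 1) with h | h
        · rw [if_pos h, if_pos (by omega)]; exact kappaL_lie ..
        · rw [if_neg h, if_neg (by omega), kappaL_zero_right, kappaL_zero_right]

lemma kappaL_right_nondeg (r : ℂ) (a : L × Module.Dual ℂ L)
    (h : ∀ b : L × Module.Dual ℂ L, kappaL r b a = 0) : a = 0 := by
  have h1 : a.1 = 0 := by
    rw [← Module.forall_dual_apply_eq_zero_iff ℂ a.1]
    intro g
    have := h ((0 : L), g)
    simpa [kappaL, kappa0] using this
  have h2 : a.2 = 0 := by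
    ext y
    have := h (y, (0 : Module.Dual ℂ L))
    simpa [kappaL, kappa0, h1] using this
  exact Prod.ext h1 h2

lemma Sf_all_zero (r : ℂ) (u : LoopD L) (h : ∀ v : LoopD L, SfX r u v = 0) : u = 0 := by
  refine Finsupp.ext fun n => ?_
  simp only [Finsupp.coe_zero, Pi.zero_apply]
  refine kappaL_right_nondeg r (u n) fun b => ?_
  have hv := h (Finsupp.single (-n - 1) b)
  rw [Sf_comm, Sf_single_left] at hv
  have idx : -(-n - 1) - 1 = n := by ring
  rwa [idx] at hv

lemma betaForm_eq (r : ℂ) (A B : TdD L) :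
    betaForm r A B = A.1 * B.2.2 + A.2.2 * B.1 + SfX r A.2.1 B.2.1 := rfl

end AuxProof

/-- For all `ℓ, s ∈ ℂ`, the bilinear form `β_{ℓ−s}` on the affine Kac–Moody
algebra `𝔡̃_{ℓ,s}` is symmetric, invariant and non-degenerate, and the `β_{ℓ−s}`-orthogonal
complement of `𝔡[t,t⁻¹]` is `ℂ∂ ⊕ ℂc`. -/
theorem betaForm_symm_invariant_nondegenerate (L : Type) [LieRing L] [LieAlgebra ℂ L]
    [FiniteDimensional ℂ L] (ℓ s : ℂ) :
    (∀ A B : TdD L, betaForm (ℓ - s) A B = betaForm (ℓ - s) B A) ∧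
    (∀ A B C : TdD L,
      betaForm (ℓ - s) (tdBr ℓ s A B) C = betaForm (ℓ - s) A (tdBr ℓ s B C)) ∧
    (∀ A : TdD L, (∀ B : TdD L, betaForm (ℓ - s) A B = 0) → A = 0) ∧
    (∀ A : TdD L,
      (∀ u : LoopD L, betaForm (ℓ - s) A ((0 : ℂ), u, (0 : ℂ)) = 0) ↔ A.2.1 = 0) := by
  set r := ℓ - s with hr
  refine ⟨?_, ?_, ?_, ?_⟩
  · intro A B
    rw [betaForm_eq, betaForm_eq, Sf_comm]
    ring
  · intro A B C
    rw [betaForm_eq, betaForm_eq]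
    show 0 * C.2.2 + omegaL ℓ A.2.1 B.2.1 * C.1
        + SfX r (A.1 • dsLoop s B.2.1 - B.1 • dsLoop s A.2.1 + loopBr A.2.1 B.2.1) C.2.1
      = A.1 * omegaL ℓ B.2.1 C.2.1 + A.2.2 * 0
        + SfX r A.2.1 (B.1 • dsLoop s C.2.1 - C.1 • dsLoop s B.2.1 + loopBr B.2.1 C.2.1)
    rw [Sf_add_left, Sf_sub_left, Sf_smul_left, Sf_smul_left,
      Sf_add_right, Sf_sub_right, Sf_smul_right, Sf_smul_right,
      hr, Sf_ds_left, Sf_ds_left, Sf_ds_right, Sf_ds_right, Sf_loopBr]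
    ring
  · intro A hA
    obtain ⟨d, u, cc⟩ := A
    have h1 : d = 0 := by
      have := hA ((0 : ℂ), (0 : LoopD L), (1 : ℂ))
      rw [betaForm_eq] at this
      simpa [Sf_zero_right] using this
    have h2 : cc = 0 := by
      have := hA ((1 : ℂ), (0 : LoopD L), (0 : ℂ))
      rw [betaForm_eq] at this
      simpa [Sf_zero_right] using this
    have h3 : u = 0 := by
      refine Sf_all_zero r u fun v => ?_
      have := hA ((0 : ℂ), v, (0 : ℂ))
      rw [betaForm_eq] at this
      simpa using this
    simp [h1, h2, h3, Prod.ext_iff]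
  · intro A
    constructor
    · intro h
      refine Sf_all_zero r A.2.1 fun v => ?_
      have := h v
      rw [betaForm_eq] at this
      simpa using this
    · intro h v
      rw [betaForm_eq, h, Sf_zero_left]
      ring
end

section
/- (i) M₀ = z·M₁ + φ(S), i.e. the map M₁ ⊕ S → M₀, (B,A) ↦ z·B + φ(A), is surjective; and (ii) for A ∈ S, φ(A) ∈ z·M₁ if and only if A ∈ K. (This computes the Čech cohomology of the sheaf 𝒪(−1) on ℙ¹ relative to the marked points t_i: H¹ vanishes and H⁰ of the outside sections is identified with K.) -/
set_option synthInstance.maxHeartbeats 1000000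
set_option maxHeartbeats 1000000

noncomputable section

open Polynomial

variable (I : Type) [Fintype I] [DecidableEq I]

/-- `R = ℂ[(t_i)_{i ∈ I}]`. -/
abbrev Rbase := MvPolynomial I ℂ

/-- `R[t]`. -/
abbrev Rt (I : Type) := Polynomial (Rbase I)

/-- `Π = Π_{i∈I} (t − t_i) ∈ R[t]`. -/
def Pprod : Rt I := ∏ i : I, (X - C (MvPolynomial.X i))

/-- `S = R[t][Π⁻¹]`. -/
abbrev Sloc := Localization.Away (Pprod I)

/-- The `R`-submodule `K ⊆ S` spanned by the elements `tⁿ·Π_{i∈I}(t−t_i)^{−k_i}` over all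
tuples `(k_i) ∈ ℕ^I` and all `n` with `0 ≤ n < Σ_i k_i`. -/
def Ksub : Submodule (Rbase I) (Sloc I) :=
  Submodule.span (Rbase I)
    {s | ∃ (k : I → ℕ) (n : ℕ), n < ∑ i : I, k i ∧
      s = algebraMap (Rt I) (Sloc I) (X ^ n) *
        ∏ i : I, (Ring.inverse (algebraMap (Rt I) (Sloc I) (X - C (MvPolynomial.X i)))) ^ k i}

/-- `R[z]`. -/
abbrev Rz (I : Type) := Polynomial (Rbase I)

/-- `Q = Π_{i∈I} (1 − t_i·z) ∈ R[z]`. -/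
def Qprod : Rz I := ∏ i : I, (1 - C (MvPolynomial.X i) * X)

/-- `M₁ = R[z][Π_{i∈I}(1−t_i z)⁻¹]`. -/
abbrev M1 := Localization.Away (Qprod I)

/-- `M₀ = R[z,z⁻¹][Π_{i∈I}(1−t_i z)⁻¹]`, realised as the localization of `R[z]` at `z·Q`. -/
abbrev M0 := Localization.Away ((X : Rz I) * Qprod I)

lemma Qprod_unit : IsUnit (algebraMap (Rz I) (M0 I) (Qprod I)) :=
  IsLocalization.Away.isUnit_of_dvd (x := (X : Rz I) * Qprod I) (dvd_mul_left _ _)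

lemma zX_unit : IsUnit (algebraMap (Rz I) (M0 I) (X : Rz I)) :=
  IsLocalization.Away.isUnit_of_dvd (x := (X : Rz I) * Qprod I) (dvd_mul_right _ _)

/-- The canonical inclusion `ψ : M₁ → M₀`. -/
def psiM : M1 I →+* M0 I :=
  Localization.awayLift (algebraMap (Rz I) (M0 I)) (Qprod I) (Qprod_unit I)

/-- The ring homomorphism `R[t] → M₀` determined by `t ↦ z⁻¹` (and the identity on `R`). -/
def fRing : Rt I →+* M0 I :=
  Polynomial.eval₂RingHom ((algebraMap (Rz I) (M0 I)).comp (Polynomial.C : Rbase I →+* Rz I))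
    (Ring.inverse (algebraMap (Rz I) (M0 I) (X : Rz I)))

lemma fRing_Pprod_unit : IsUnit (fRing I (Pprod I)) := by
  rw [Pprod, map_prod]
  refine Finset.prod_induction _ IsUnit (fun a b ha hb => ha.mul hb) isUnit_one ?_
  intro i _
  simp only [fRing, coe_eval₂RingHom, eval₂_sub, eval₂_X, eval₂_C]
  have key : Ring.inverse (algebraMap (Rz I) (M0 I) (X : Rz I)) -
      (algebraMap (Rz I) (M0 I)).comp (Polynomial.C : Rbase I →+* Rz I) (MvPolynomial.X i) =
      Ring.inverse (algebraMap (Rz I) (M0 I) (X : Rz I)) *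
        algebraMap (Rz I) (M0 I) (1 - C (MvPolynomial.X i) * X) := by
    rw [map_sub, map_one, map_mul, mul_sub, mul_one, RingHom.comp_apply]
    congr 1
    rw [mul_comm (algebraMap (Rz I) (M0 I) (C (MvPolynomial.X i))), ← mul_assoc,
      Ring.inverse_mul_cancel _ (zX_unit I), one_mul]
  rw [key]
  refine IsUnit.mul ((zX_unit I).ringInverse) ?_
  exact IsLocalization.Away.isUnit_of_dvd (x := (X : Rz I) * Qprod I)
    (dvd_mul_of_dvd_right (Finset.dvd_prod_of_mem _ (Finset.mem_univ i)) _)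

/-- The ring homomorphism `φ : S → M₀` determined by `φ(t) = z⁻¹`. -/
def phiM : Sloc I →+* M0 I :=
  Localization.awayLift (fRing I) (Pprod I) (fRing_Pprod_unit I)

set_option linter.unusedSectionVars false
section Aux

lemma mapRingInverse {R S : Type*} [CommRing R] [CommRing S] (f : R →+* S) {a : R} (h : IsUnit a) :
    f (Ring.inverse a) = Ring.inverse (f a) := by
  symm
  calc Ring.inverse (f a) = Ring.inverse (f a) * (f a * f (Ring.inverse a)) := by
        rw [← map_mul, Ring.mul_inverse_cancel a h, map_one, mul_one]
  _ = (Ring.inverse (f a) * f a) * f (Ring.inverse a) := by ring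
  _ = f (Ring.inverse a) := by rw [Ring.inverse_mul_cancel _ (h.map f), one_mul]

lemma eq_mul_ringInverse_pow {R : Type*} [CommRing R] {a b u : R} (hu : IsUnit u) (n : ℕ)
    (h : a * u ^ n = b) : a = b * (Ring.inverse u) ^ n := by
  rw [← h, mul_assoc, ← mul_pow, Ring.mul_inverse_cancel _ hu, one_pow, mul_one]

variable (I : Type) [Fintype I] [DecidableEq I]

abbrev FF := FractionRing (Rz I)

abbrev algF : Rz I →+* FF I := algebraMap (Rz I) (FF I)

abbrev zeta : FF I := algF I X

abbrev cc (i : I) : FF I := algF I (C (MvPolynomial.X i))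

lemma algF_inj : Function.Injective (algF I) :=
  IsFractionRing.injective (Rz I) (FF I)

lemma Qcoeff0 : (Qprod I).coeff 0 = 1 := by
  rw [Polynomial.coeff_zero_eq_eval_zero, Qprod, Polynomial.eval_prod]
  simp

lemma Qne : Qprod I ≠ 0 := fun h => by
  have := Qcoeff0 I
  rw [h, Polynomial.coeff_zero] at this
  exact one_ne_zero this.symm

lemma XQne : (X : Rz I) * Qprod I ≠ 0 := mul_ne_zero Polynomial.X_ne_zero (Qne I)

lemma XQunitF : IsUnit (algF I ((X : Rz I) * Qprod I)) :=
  isUnit_iff_ne_zero.mpr (fun h => XQne I (algF_inj I (by rw [h, map_zero])))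

def iotaM : M0 I →+* FF I := Localization.awayLift (algF I) _ (XQunitF I)

@[simp] lemma iota_alg (p : Rz I) : iotaM I (algebraMap (Rz I) (M0 I) p) = algF I p :=
  IsLocalization.Away.lift_eq _ (XQunitF I) p

lemma iota_inj : Function.Injective (iotaM I) := by
  rw [injective_iff_map_eq_zero]
  intro x hx
  obtain ⟨⟨p, s⟩, hps⟩ := IsLocalization.surj (Submonoid.powers ((X : Rz I) * Qprod I)) x
  have hs : IsUnit (algebraMap (Rz I) (M0 I) (s : Rz I)) := by
    obtain ⟨n, hn⟩ := s.2
    rw [← hn, map_pow]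
    exact (IsLocalization.Away.algebraMap_isUnit _).pow n
  have hp : algF I p = 0 := by
    have h2 := congrArg (iotaM I) hps
    rw [map_mul, hx, zero_mul, iota_alg] at h2
    exact h2.symm
  have hp0 : p = 0 := algF_inj I (by rw [hp, map_zero])
  rw [hp0, map_zero] at hps
  exact (hs.mul_left_eq_zero).mp hps

end Aux
section Aux2
variable (I : Type) [Fintype I] [DecidableEq I]

lemma Pprod_unit_S : IsUnit (algebraMap (Rt I) (Sloc I) (Pprod I)) :=
  IsLocalization.Away.algebraMap_isUnit _

lemma tfactor_unit_S (i : I) :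
    IsUnit (algebraMap (Rt I) (Sloc I) (X - C (MvPolynomial.X i))) :=
  IsLocalization.Away.isUnit_of_dvd (x := Pprod I)
    (by unfold Pprod; exact Finset.dvd_prod_of_mem _ (Finset.mem_univ i))

lemma Q_unit_M1 : IsUnit (algebraMap (Rz I) (M1 I) (Qprod I)) :=
  IsLocalization.Away.algebraMap_isUnit _

lemma qfactor_unit_M1 (i : I) :
    IsUnit (algebraMap (Rz I) (M1 I) (1 - C (MvPolynomial.X i) * X)) :=
  IsLocalization.Away.isUnit_of_dvd (x := Qprod I)
    (by unfold Qprod; exact Finset.dvd_prod_of_mem _ (Finset.mem_univ i))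

lemma XQ_unit_M0 : IsUnit (algebraMap (Rz I) (M0 I) ((X : Rz I) * Qprod I)) :=
  IsLocalization.Away.algebraMap_isUnit _

lemma phi_alg (p : Rt I) : phiM I (algebraMap (Rt I) (Sloc I) p) = fRing I p :=
  IsLocalization.Away.lift_eq _ (fRing_Pprod_unit I) p

lemma psi_alg (p : Rz I) :
    psiM I (algebraMap (Rz I) (M1 I) p) = algebraMap (Rz I) (M0 I) p :=
  IsLocalization.Away.lift_eq _ (Qprod_unit I) p

lemma zeta_ne : zeta I ≠ 0 :=
  fun h => Polynomial.X_ne_zero (algF_inj I (by rw [map_zero]; exact h))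

lemma qfactor_ne0 (i : I) : (1 - C (MvPolynomial.X i) * X : Rz I) ≠ 0 := by
  intro h
  have h2 : (1 - C (MvPolynomial.X i) * X : Rz I).coeff 0 = 1 := by
    rw [Polynomial.coeff_zero_eq_eval_zero]; simp
  rw [h, Polynomial.coeff_zero] at h2
  exact one_ne_zero h2.symm

lemma qfactor_ne (i : I) : (1 : FF I) - cc I i * zeta I ≠ 0 := by
  intro h
  apply qfactor_ne0 I i
  apply algF_inj I
  rw [map_zero, map_sub, map_one, map_mul]
  exact h

lemma qF_ne : algF I (Qprod I) ≠ 0 :=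
  fun h => Qne I (algF_inj I (by rw [h, map_zero]))

lemma algF_Q : algF I (Qprod I) = ∏ i : I, (1 - cc I i * zeta I) := by
  rw [Qprod, map_prod]
  exact Finset.prod_congr rfl fun i _ => by rw [map_sub, map_one, map_mul]

lemma algF_eval (p : Rz I) :
    algF I p = eval₂ ((algF I).comp (Polynomial.C : Rbase I →+* Rz I)) (zeta I) p := by
  conv_lhs => rw [show p = eval₂ Polynomial.C Polynomial.X p from (Polynomial.eval₂_C_X).symm]
  rw [Polynomial.hom_eval₂]

lemma iotaphi_alg (p : Rt I) :
    iotaM I (phiM I (algebraMap (Rt I) (Sloc I) p)) =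
      eval₂ ((algF I).comp (Polynomial.C : Rbase I →+* Rz I)) (zeta I)⁻¹ p := by
  rw [phi_alg, fRing, coe_eval₂RingHom, Polynomial.hom_eval₂]
  have h1 : (iotaM I).comp ((algebraMap (Rz I) (M0 I)).comp (Polynomial.C : Rbase I →+* Rz I)) =
      (algF I).comp (Polynomial.C : Rbase I →+* Rz I) :=
    RingHom.ext fun r => by rw [RingHom.comp_apply, RingHom.comp_apply, iota_alg]; rfl
  have h2 : iotaM I (Ring.inverse (algebraMap (Rz I) (M0 I) (X : Rz I))) = (zeta I)⁻¹ := by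
    rw [mapRingInverse _ (zX_unit I), iota_alg, Ring.inverse_eq_inv]
  rw [h1, h2]

lemma iotaphi_inv (u : Rt I) (h : IsUnit (algebraMap (Rt I) (Sloc I) u)) :
    iotaM I (phiM I (Ring.inverse (algebraMap (Rt I) (Sloc I) u))) =
      (eval₂ ((algF I).comp (Polynomial.C : Rbase I →+* Rz I)) (zeta I)⁻¹ u)⁻¹ := by
  have e1 : iotaM I (phiM I (Ring.inverse (algebraMap (Rt I) (Sloc I) u))) =
      ((iotaM I).comp (phiM I)) (Ring.inverse (algebraMap (Rt I) (Sloc I) u)) := rfl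
  rw [e1, mapRingInverse _ h, RingHom.comp_apply, iotaphi_alg, Ring.inverse_eq_inv]

lemma iotapsi_alg (p : Rz I) :
    iotaM I (psiM I (algebraMap (Rz I) (M1 I) p)) = algF I p := by
  rw [psi_alg, iota_alg]

lemma iotapsi_inv (u : Rz I) (h : IsUnit (algebraMap (Rz I) (M1 I) u)) :
    iotaM I (psiM I (Ring.inverse (algebraMap (Rz I) (M1 I) u))) = (algF I u)⁻¹ := by
  have e1 : iotaM I (psiM I (Ring.inverse (algebraMap (Rz I) (M1 I) u))) =
      ((iotaM I).comp (psiM I)) (Ring.inverse (algebraMap (Rz I) (M1 I) u)) := rfl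
  rw [e1, mapRingInverse _ h, RingHom.comp_apply, iotapsi_alg, Ring.inverse_eq_inv]

lemma iota_inv (u : Rz I) (h : IsUnit (algebraMap (Rz I) (M0 I) u)) :
    iotaM I (Ring.inverse (algebraMap (Rz I) (M0 I) u)) = (algF I u)⁻¹ := by
  rw [mapRingInverse _ h, iota_alg, Ring.inverse_eq_inv]

lemma evalPi : eval₂ ((algF I).comp (Polynomial.C : Rbase I →+* Rz I)) (zeta I)⁻¹ (Pprod I) =
    ∏ i : I, ((zeta I)⁻¹ - cc I i) := by
  rw [Pprod, Polynomial.eval₂_finset_prod]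
  exact Finset.prod_congr rfl fun i _ => by
    rw [Polynomial.eval₂_sub, Polynomial.eval₂_X, Polynomial.eval₂_C, RingHom.comp_apply]

lemma factor_rel (i : I) : zeta I * ((zeta I)⁻¹ - cc I i) = 1 - cc I i * zeta I := by
  rw [mul_sub, mul_inv_cancel₀ (zeta_ne I)]; ring

lemma zinv_sub_ne (i : I) : (zeta I)⁻¹ - cc I i ≠ 0 :=
  fun h => qfactor_ne I i (by rw [← factor_rel I i, h, mul_zero])

lemma inv_fac (i : I) : ((zeta I)⁻¹ - cc I i)⁻¹ = zeta I * (1 - cc I i * zeta I)⁻¹ := by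
  have h : (zeta I)⁻¹ - cc I i = (zeta I)⁻¹ * (1 - cc I i * zeta I) := by
    rw [← factor_rel I i, ← mul_assoc, inv_mul_cancel₀ (zeta_ne I), one_mul]
  rw [h, mul_inv, inv_inv]

lemma key_prod :
    (zeta I) ^ (Fintype.card I) * ∏ i : I, ((zeta I)⁻¹ - cc I i) = algF I (Qprod I) := by
  rw [algF_Q, ← Finset.card_univ, ← Finset.prod_const, ← Finset.prod_mul_distrib]
  exact Finset.prod_congr rfl fun i _ => factor_rel I i

lemma evalPi_ne : eval₂ ((algF I).comp (Polynomial.C : Rbase I →+* Rz I)) (zeta I)⁻¹ (Pprod I) ≠ 0 := by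
  rw [evalPi]
  exact Finset.prod_ne_zero_iff.mpr fun i _ => zinv_sub_ne I i

end Aux2
section Aux3
variable (I : Type) [Fintype I] [DecidableEq I]

lemma phi_smul (r : Rbase I) (x : Sloc I) : phiM I (r • x) = r • phiM I x := by
  rw [Algebra.smul_def, Algebra.smul_def, map_mul]
  congr 1
  rw [IsScalarTower.algebraMap_apply (Rbase I) (Rt I) (Sloc I), phi_alg,
    IsScalarTower.algebraMap_apply (Rbase I) (Rz I) (M0 I), Polynomial.algebraMap_eq]
  simp [fRing, coe_eval₂RingHom, eval₂_C]

lemma psi_smul (r : Rbase I) (x : M1 I) : psiM I (r • x) = r • psiM I x := by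
  rw [Algebra.smul_def, Algebra.smul_def, map_mul]
  congr 1
  rw [IsScalarTower.algebraMap_apply (Rbase I) (Rz I) (M1 I), psi_alg,
    IsScalarTower.algebraMap_apply (Rbase I) (Rz I) (M0 I)]

lemma iotaphi_X : iotaM I (phiM I (algebraMap (Rt I) (Sloc I) (X : Rt I))) = (zeta I)⁻¹ := by
  rw [iotaphi_alg, Polynomial.eval₂_X]

lemma iotaphi_tfac (i : I) :
    iotaM I (phiM I (Ring.inverse (algebraMap (Rt I) (Sloc I) (X - C (MvPolynomial.X i))))) =
      zeta I * (1 - cc I i * zeta I)⁻¹ := by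
  rw [iotaphi_inv _ _ (tfactor_unit_S I i), Polynomial.eval₂_sub, Polynomial.eval₂_X,
    Polynomial.eval₂_C, RingHom.comp_apply, inv_fac]

lemma iotaphi_Pi :
    iotaM I (phiM I (Ring.inverse (algebraMap (Rt I) (Sloc I) (Pprod I)))) =
      (zeta I) ^ (Fintype.card I) * (algF I (Qprod I))⁻¹ := by
  rw [iotaphi_inv _ _ (Pprod_unit_S I), evalPi]
  have h : ∏ i : I, ((zeta I)⁻¹ - cc I i) =
      ((zeta I) ^ (Fintype.card I))⁻¹ * algF I (Qprod I) := by
    rw [← key_prod, ← mul_assoc, inv_mul_cancel₀ (pow_ne_zero _ (zeta_ne I)), one_mul]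
  rw [h, mul_inv, inv_inv]

lemma iotapsi_X : iotaM I (psiM I (algebraMap (Rz I) (M1 I) (X : Rz I))) = zeta I := by
  rw [iotapsi_alg]

lemma iotapsi_qfac (i : I) :
    iotaM I (psiM I (Ring.inverse (algebraMap (Rz I) (M1 I) (1 - C (MvPolynomial.X i) * X)))) =
      (1 - cc I i * zeta I)⁻¹ := by
  rw [iotapsi_inv _ _ (qfactor_unit_M1 I i), map_sub, map_one, map_mul]

lemma iotapsi_Q :
    iotaM I (psiM I (Ring.inverse (algebraMap (Rz I) (M1 I) (Qprod I)))) =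
      (algF I (Qprod I))⁻¹ := by
  rw [iotapsi_inv _ _ (Q_unit_M1 I)]

lemma iota_X : iotaM I (algebraMap (Rz I) (M0 I) (X : Rz I)) = zeta I := iota_alg I X

lemma iota_XQinv :
    iotaM I (Ring.inverse (algebraMap (Rz I) (M0 I) ((X : Rz I) * Qprod I))) =
      (zeta I * algF I (Qprod I))⁻¹ := by
  rw [iota_inv _ _ (XQ_unit_M0 I), map_mul]

lemma gen_eq (k : I → ℕ) (n : ℕ) (hn : n < ∑ i : I, k i) :
    phiM I (algebraMap (Rt I) (Sloc I) (X ^ n) *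
        ∏ i : I, (Ring.inverse (algebraMap (Rt I) (Sloc I) (X - C (MvPolynomial.X i)))) ^ k i) =
      algebraMap (Rz I) (M0 I) (X : Rz I) *
        psiM I (algebraMap (Rz I) (M1 I) (X ^ (∑ i : I, k i - n - 1)) *
          ∏ i : I, (Ring.inverse (algebraMap (Rz I) (M1 I) (1 - C (MvPolynomial.X i) * X))) ^ k i) := by
  obtain ⟨a, ha⟩ : ∃ a, ∑ i : I, k i = n + 1 + a := ⟨∑ i : I, k i - (n + 1), by omega⟩
  have hsub : ∑ i : I, k i - n - 1 = a := by omega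
  apply iota_inj
  rw [hsub]
  simp only [map_mul, map_prod, map_pow, iotaphi_X, iotaphi_tfac, iotapsi_X, iotapsi_qfac,
    iota_X]
  simp only [mul_pow, Finset.prod_mul_distrib, Finset.prod_pow_eq_pow_sum, ha]
  have hz := zeta_ne I
  have hP : ∏ x : I, ((1:FF I) - cc I x * zeta I) ^ k x ≠ 0 :=
    Finset.prod_ne_zero_iff.mpr fun i _ => pow_ne_zero _ (qfactor_ne I i)
  field_simp
  have hzn : zeta I ^ n * (zeta I)⁻¹ ^ n = 1 := by rw [← mul_pow, mul_inv_cancel₀ hz, one_pow]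
  simp only [one_div]
  linear_combination (zeta I * zeta I ^ a * ∏ x : I, (1 - zeta I * cc I x)⁻¹ ^ k x) * hzn
end Aux3
section Aux4
variable (I : Type) [Fintype I] [DecidableEq I]

lemma iota_XQinv' :
    iotaM I (Ring.inverse (algebraMap (Rz I) (M0 I) (X : Rz I) *
      algebraMap (Rz I) (M0 I) (Qprod I))) = (zeta I * algF I (Qprod I))⁻¹ := by
  rw [← map_mul]; exact iota_XQinv I

lemma elem_decomp (n j : ℕ) : ∃ (B : M1 I) (A : Sloc I),
    algebraMap (Rz I) (M0 I) ((X : Rz I) ^ j) *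
        (Ring.inverse (algebraMap (Rz I) (M0 I) ((X : Rz I) * Qprod I))) ^ n
      = algebraMap (Rz I) (M0 I) (X : Rz I) * psiM I B + phiM I A := by
  have hz := zeta_ne I
  have hq := qF_ne I
  have hz' : (algF I) X ≠ 0 := hz
  rcases le_or_gt j n with hj | hj
  · obtain ⟨b, hb⟩ : ∃ b, n = j + b := ⟨n - j, by omega⟩
    refine ⟨0, algebraMap (Rt I) (Sloc I) ((X : Rt I) ^ (n * Fintype.card I + b)) *
      (Ring.inverse (algebraMap (Rt I) (Sloc I) (Pprod I))) ^ n, ?_⟩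
    apply iota_inj
    simp only [map_add, map_mul, map_pow, map_zero, mul_zero, zero_add,
      iotaphi_X, iotaphi_Pi, iota_X, iota_XQinv, iota_XQinv', iota_alg]
    subst hb
    simp only [pow_add, pow_mul]
    simp only [mul_pow, inv_pow]
    field_simp
    ring
  · obtain ⟨a, rfl⟩ : ∃ a, j = n + 1 + a := ⟨j - n - 1, by omega⟩
    refine ⟨algebraMap (Rz I) (M1 I) ((X : Rz I) ^ a) *
      (Ring.inverse (algebraMap (Rz I) (M1 I) (Qprod I))) ^ n, 0, ?_⟩
    apply iota_inj
    simp only [map_add, map_mul, map_pow, map_zero, add_zero,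
      iotapsi_X, iotapsi_Q, iota_X, iota_XQinv, iota_XQinv', iota_alg]
    simp only [pow_add, pow_one]
    simp only [inv_pow]
    field_simp
    ring
end Aux4
section Aux5
variable (I : Type) [Fintype I] [DecidableEq I]

lemma forward_mem (A : Sloc I) (B : M1 I)
    (h : phiM I A = algebraMap (Rz I) (M0 I) (X : Rz I) * psiM I B) : A ∈ Ksub I := by
  obtain ⟨⟨P, s⟩, hP⟩ := IsLocalization.surj (Submonoid.powers (Pprod I)) A
  obtain ⟨k, hk⟩ := s.2
  rw [← hk, map_pow] at hP
  have hA : A = algebraMap (Rt I) (Sloc I) P *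
      (Ring.inverse (algebraMap (Rt I) (Sloc I) (Pprod I))) ^ k :=
    eq_mul_ringInverse_pow (Pprod_unit_S I) k hP
  by_cases hP0 : P = 0
  · rw [hP0, map_zero, zero_mul] at hA
    rw [hA]; exact (Ksub I).zero_mem
  obtain ⟨⟨H, sB⟩, hB⟩ := IsLocalization.surj (Submonoid.powers (Qprod I)) B
  obtain ⟨m, hm⟩ := sB.2
  rw [← hm, map_pow] at hB
  have hz := zeta_ne I
  have hq := qF_ne I
  have hFA : iotaM I (phiM I A) =
      eval₂ ((algF I).comp (Polynomial.C : Rbase I →+* Rz I)) (zeta I)⁻¹ P *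
        ((zeta I) ^ Fintype.card I * (algF I (Qprod I))⁻¹) ^ k := by
    rw [hA, map_mul, map_mul, map_pow, map_pow, iotaphi_alg, iotaphi_Pi]
  have hFB : iotaM I (psiM I B) * (algF I (Qprod I)) ^ m = algF I H := by
    have h2 := congrArg (iotaM I) (congrArg (psiM I) hB)
    rwa [map_mul, map_pow, map_mul, map_pow, iotapsi_alg, iotapsi_alg] at h2
  have hmain : iotaM I (phiM I A) = zeta I * iotaM I (psiM I B) := by
    rw [h, map_mul, iota_X]
  letI : Invertible ((zeta I)⁻¹) := invertibleOfNonzero (inv_ne_zero hz)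
  have hrev2 : algF I (P.reverse) =
      eval₂ ((algF I).comp (Polynomial.C : Rbase I →+* Rz I)) (zeta I)⁻¹ P *
        (zeta I) ^ P.natDegree := by
    have h0 := Polynomial.eval₂_reverse_mul_pow
      ((algF I).comp (Polynomial.C : Rbase I →+* Rz I)) ((zeta I)⁻¹) P
    rw [invOf_eq_inv, inv_inv] at h0
    rw [algF_eval, ← h0]
    field_simp
    rw [one_div, inv_pow, mul_assoc, inv_mul_cancel₀ (pow_ne_zero _ hz), mul_one]
  have key : eval₂ ((algF I).comp (Polynomial.C : Rbase I →+* Rz I)) (zeta I)⁻¹ P *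
      ((zeta I) ^ Fintype.card I) ^ k = zeta I * iotaM I (psiM I B) * (algF I (Qprod I)) ^ k := by
    have h3 : iotaM I (phiM I A) * (algF I (Qprod I)) ^ k =
        zeta I * iotaM I (psiM I B) * (algF I (Qprod I)) ^ k := by rw [hmain]
    rw [hFA] at h3
    field_simp at h3
    rw [one_div] at h3
    rw [div_pow] at h3
    rw [← h3]
    field_simp
  have hpoly : (X : Rz I) ^ (Fintype.card I * k) * P.reverse * (Qprod I) ^ m =
      (X : Rz I) ^ (P.natDegree + 1) * H * (Qprod I) ^ k := by
    apply algF_inj I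
    simp only [map_mul, map_pow]
    rw [hrev2, ← hFB, pow_mul, pow_succ]
    linear_combination ((zeta I) ^ P.natDegree * (algF I (Qprod I)) ^ m) * key
  have hrev0 : P.reverse ≠ 0 := fun h0 => hP0 (Polynomial.reverse_eq_zero.mp h0)
  have hH0 : H ≠ 0 := by
    intro h0
    rw [h0, mul_zero, zero_mul] at hpoly
    exact (mul_ne_zero (mul_ne_zero (pow_ne_zero _ Polynomial.X_ne_zero) hrev0)
      (pow_ne_zero _ (Qne I))) hpoly
  have hQm : ((Qprod I) ^ m).natTrailingDegree = 0 :=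
    Polynomial.natTrailingDegree_eq_zero.mpr (Or.inr (by
      rw [Polynomial.coeff_zero_eq_eval_zero, Polynomial.eval_pow,
        ← Polynomial.coeff_zero_eq_eval_zero, Qcoeff0, one_pow]; exact one_ne_zero))
  have hQk : ((Qprod I) ^ k).natTrailingDegree = 0 :=
    Polynomial.natTrailingDegree_eq_zero.mpr (Or.inr (by
      rw [Polynomial.coeff_zero_eq_eval_zero, Polynomial.eval_pow,
        ← Polynomial.coeff_zero_eq_eval_zero, Qcoeff0, one_pow]; exact one_ne_zero))
  have hdeg := congrArg Polynomial.natTrailingDegree hpoly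
  rw [Polynomial.natTrailingDegree_mul
      (mul_ne_zero (pow_ne_zero _ Polynomial.X_ne_zero) hrev0) (pow_ne_zero _ (Qne I)),
    Polynomial.natTrailingDegree_mul (pow_ne_zero _ Polynomial.X_ne_zero) hrev0,
    Polynomial.natTrailingDegree_mul
      (mul_ne_zero (pow_ne_zero _ Polynomial.X_ne_zero) hH0) (pow_ne_zero _ (Qne I)),
    Polynomial.natTrailingDegree_mul (pow_ne_zero _ Polynomial.X_ne_zero) hH0,
    Polynomial.natTrailingDegree_X_pow, Polynomial.natTrailingDegree_X_pow,
    Polynomial.natTrailingDegree_reverse, hQm, hQk] at hdeg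
  have hd : P.natDegree < Fintype.card I * k := by omega
  -- membership
  have hA2 : A = ∑ n ∈ Finset.range (P.natDegree + 1), P.coeff n •
      (algebraMap (Rt I) (Sloc I) ((X : Rt I) ^ n) *
        (Ring.inverse (algebraMap (Rt I) (Sloc I) (Pprod I))) ^ k) := by
    conv_lhs => rw [hA]
    conv_lhs => rw [Polynomial.as_sum_range_C_mul_X_pow P]
    rw [map_sum, Finset.sum_mul]
    refine Finset.sum_congr rfl fun n _ => ?_
    rw [map_mul, mul_assoc, Algebra.smul_def,
      IsScalarTower.algebraMap_apply (Rbase I) (Rt I) (Sloc I), Polynomial.algebraMap_eq]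
  rw [hA2]
  apply Submodule.sum_mem
  intro n hn
  apply Submodule.smul_mem
  apply Submodule.subset_span
  refine ⟨fun _ => k, n, ?_, ?_⟩
  · rw [Finset.sum_const, Finset.card_univ, smul_eq_mul]
    have hn' : n ≤ P.natDegree := by
      have := Finset.mem_range.mp hn; omega
    omega
  · congr 1
    have hinv : Ring.inverse (algebraMap (Rt I) (Sloc I) (Pprod I)) =
        ∏ i : I, Ring.inverse (algebraMap (Rt I) (Sloc I) (X - C (MvPolynomial.X i))) := by
      rw [show algebraMap (Rt I) (Sloc I) (Pprod I) =
          ∏ i : I, algebraMap (Rt I) (Sloc I) ((X : Rt I) - C (MvPolynomial.X i)) from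
        map_prod _ _ _]
      have h2 := map_prod (MonoidWithZero.inverse (M := Sloc I))
        (fun i => algebraMap (Rt I) (Sloc I) ((X : Rt I) - C (MvPolynomial.X i))) Finset.univ
      simp only [MonoidWithZero.inverse_apply] at h2
      exact h2
    rw [hinv, ← Finset.prod_pow]

end Aux5

/-- (i) `M₀ = z·M₁ + φ(S)`, i.e. the map `(B,A) ↦ z·B + φ(A)` is surjective; and
(ii) for `A ∈ S`, `φ(A) ∈ z·M₁` if and only if `A ∈ K`. -/
theorem cech_cohomology_of_O_minus_one [Nonempty I] :
    (∀ m : M0 I, ∃ (B : M1 I) (A : Sloc I),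
      m = algebraMap (Rz I) (M0 I) (X : Rz I) * psiM I B + phiM I A) ∧
    (∀ A : Sloc I,
      (∃ B : M1 I, phiM I A = algebraMap (Rz I) (M0 I) (X : Rz I) * psiM I B)
        ↔ A ∈ Ksub I) := by
  constructor
  · intro m0
    obtain ⟨⟨p, s⟩, hps⟩ := IsLocalization.surj (Submonoid.powers ((X : Rz I) * Qprod I)) m0
    obtain ⟨n, hn⟩ := s.2
    rw [← hn, map_pow] at hps
    have hm : m0 = algebraMap (Rz I) (M0 I) p *
        (Ring.inverse (algebraMap (Rz I) (M0 I) ((X : Rz I) * Qprod I))) ^ n :=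
      eq_mul_ringInverse_pow (XQ_unit_M0 I) n hps
    choose Bf Af hBA using elem_decomp I
    refine ⟨∑ j ∈ Finset.range (p.natDegree + 1), p.coeff j • Bf n j,
      ∑ j ∈ Finset.range (p.natDegree + 1), p.coeff j • Af n j, ?_⟩
    have hm2 : m0 = ∑ j ∈ Finset.range (p.natDegree + 1), p.coeff j •
        (algebraMap (Rz I) (M0 I) ((X : Rz I) ^ j) *
          (Ring.inverse (algebraMap (Rz I) (M0 I) ((X : Rz I) * Qprod I))) ^ n) := by
      conv_lhs => rw [hm]
      conv_lhs => rw [Polynomial.as_sum_range_C_mul_X_pow p]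
      rw [map_sum, Finset.sum_mul]
      refine Finset.sum_congr rfl fun j _ => ?_
      rw [map_mul, mul_assoc, Algebra.smul_def,
        IsScalarTower.algebraMap_apply (Rbase I) (Rz I) (M0 I), Polynomial.algebraMap_eq]
    rw [hm2, map_sum, map_sum, Finset.mul_sum, ← Finset.sum_add_distrib]
    refine Finset.sum_congr rfl fun j _ => ?_
    rw [psi_smul, phi_smul, hBA n j, smul_add, mul_smul_comm]
  · intro A
    constructor
    · rintro ⟨B, hB⟩
      exact forward_mem I A B hB
    · intro hA
      refine Submodule.span_induction
        (p := fun x _ => ∃ B : M1 I,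
          phiM I x = algebraMap (Rz I) (M0 I) (X : Rz I) * psiM I B) ?_ ?_ ?_ ?_ hA
      · rintro x ⟨kk, n, hn, rfl⟩
        exact ⟨algebraMap (Rz I) (M1 I) ((X : Rz I) ^ (∑ i : I, kk i - n - 1)) *
          ∏ i : I, (Ring.inverse (algebraMap (Rz I) (M1 I)
            (1 - C (MvPolynomial.X i) * X))) ^ kk i,
          gen_eq I kk n hn⟩
      · exact ⟨0, by rw [map_zero, map_zero, mul_zero]⟩
      · rintro x y _ _ ⟨B1, h1⟩ ⟨B2, h2⟩
        exact ⟨B1 + B2, by rw [map_add, h1, h2, map_add, mul_add]⟩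
      · rintro r x _ ⟨B1, h1⟩
        exact ⟨r • B1, by rw [phi_smul, h1, psi_smul, mul_smul_comm]⟩
end
end
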